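/- Let Q : ℝ → ℝ be twice differentiable, let A > 0 and τ₁ > 0, and define ρ₁(τ) = e^{(τ−τ₁)/2} · A/√τ₁ and q₀(ρ, τ) = ρ₁(τ)² · Q(ρ/ρ₁(τ)). Then for all ρ ∈ ℝ and all τ > 0, ∂_τ q₀(ρ,τ) − (1/τ) ∂²_ρ q₀(ρ,τ) + (ρ/2) ∂_ρ q₀(ρ,τ) − q₀(ρ,τ) = −(1/τ) Q''(ρ/ρ₁(τ)). -/

import Mathlib

/-- With `ρ₁(τ) = e^{(τ-τ₁)/2} A/√τ₁` and `q₀(ρ,τ) = ρ₁(τ)² Q(ρ/ρ₁(τ))` for a twice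
differentiable `Q`, the self-similarly expanding profile `q₀` satisfies
`ℒ[q₀] = ∂_τ q₀ - (1/τ) ∂²_ρ q₀ + (ρ/2) ∂_ρ q₀ - q₀ = -(1/τ) Q''(ρ/ρ₁(τ))`. -/
theorem expanding_profile_almost_null (Q : ℝ → ℝ)
    (hQ : Differentiable ℝ Q) (hQ' : Differentiable ℝ (deriv Q))
    (A τ₁ : ℝ) (hA : 0 < A) (hτ₁ : 0 < τ₁)
    (ρ₁ : ℝ → ℝ) (hρ₁ : ∀ τ, ρ₁ τ = Real.exp ((τ - τ₁) / 2) * A / Real.sqrt τ₁)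
    (q₀ : ℝ → ℝ → ℝ) (hq₀ : ∀ ρ τ, q₀ ρ τ = (ρ₁ τ) ^ 2 * Q (ρ / ρ₁ τ)) :
    ∀ ρ τ : ℝ, 0 < τ →
      deriv (fun t => q₀ ρ t) τ
        - (1 / τ) * deriv (deriv (fun r => q₀ r τ)) ρ
        + (ρ / 2) * deriv (fun r => q₀ r τ) ρ
        - q₀ ρ τ
      = -(1 / τ) * deriv (deriv Q) (ρ / ρ₁ τ) := by
  intro ρ τ hτ
  have hspos : 0 < Real.sqrt τ₁ := Real.sqrt_pos.mpr hτ₁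
  have hbpos : 0 < ρ₁ τ := by rw [hρ₁]; positivity
  have hb : ρ₁ τ ≠ 0 := ne_of_gt hbpos
  set b : ℝ := ρ₁ τ with hbdef
  -- first spatial derivative (as a function)
  have hder1 : deriv (fun r => q₀ r τ) = fun r => b * deriv Q (r / b) := by
    funext r
    have h1 : HasDerivAt (fun x : ℝ => x / b) (1 / b) r := (hasDerivAt_id r).div_const b
    have h2 : HasDerivAt (fun x : ℝ => Q (x / b)) (deriv Q (r / b) * (1 / b)) r :=
      ((hQ (r / b)).hasDerivAt).comp r h1
    have h3 : HasDerivAt (fun x : ℝ => b ^ 2 * Q (x / b))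
        (b ^ 2 * (deriv Q (r / b) * (1 / b))) r := h2.const_mul _
    have h4 : (fun r => q₀ r τ) = fun x : ℝ => b ^ 2 * Q (x / b) := by
      funext x; rw [hq₀]
    rw [h4, h3.deriv]
    field_simp
  -- second spatial derivative at ρ
  have hder2 : deriv (deriv (fun r => q₀ r τ)) ρ = deriv (deriv Q) (ρ / b) := by
    rw [hder1]
    have h1 : HasDerivAt (fun x : ℝ => x / b) (1 / b) ρ := (hasDerivAt_id ρ).div_const b
    have h2 : HasDerivAt (fun x : ℝ => deriv Q (x / b))
        (deriv (deriv Q) (ρ / b) * (1 / b)) ρ := by have := ((hQ' (ρ / b)).hasDerivAt).comp ρ h1; exact this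
    have h3 : HasDerivAt (fun x : ℝ => b * deriv Q (x / b))
        (b * (deriv (deriv Q) (ρ / b) * (1 / b))) ρ := h2.const_mul _
    rw [h3.deriv]
    field_simp
  -- time derivative at τ
  have htime : deriv (fun t => q₀ ρ t) τ
      = b ^ 2 * Q (ρ / b) - (ρ / 2) * (b * deriv Q (ρ / b)) := by
    have hfun : (fun t => q₀ ρ t)
        = fun t => (Real.exp ((t - τ₁) / 2) * A / Real.sqrt τ₁) ^ 2
            * Q (ρ / (Real.exp ((t - τ₁) / 2) * A / Real.sqrt τ₁)) := by
      funext t; rw [hq₀, hρ₁]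
    have hlin : HasDerivAt (fun t : ℝ => (t - τ₁) / 2) (1 / 2) τ :=
      ((hasDerivAt_id τ).sub_const τ₁).div_const 2
    have hexp : HasDerivAt (fun t : ℝ => Real.exp ((t - τ₁) / 2))
        (Real.exp ((τ - τ₁) / 2) * (1 / 2)) τ :=
      by have := (Real.hasDerivAt_exp ((τ - τ₁) / 2)).comp τ hlin; exact this
    have hrho : HasDerivAt (fun t : ℝ => Real.exp ((t - τ₁) / 2) * A / Real.sqrt τ₁)
        (Real.exp ((τ - τ₁) / 2) * (1 / 2) * A / Real.sqrt τ₁) τ :=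
      (hexp.mul_const A).div_const _
    have hval : Real.exp ((τ - τ₁) / 2) * A / Real.sqrt τ₁ = b := (hρ₁ τ).symm
    have hval' : Real.exp ((τ - τ₁) / 2) * (1 / 2) * A / Real.sqrt τ₁ = b / 2 := by
      rw [← hval]; ring
    rw [hval'] at hrho
    have hsq : HasDerivAt (fun t : ℝ => (Real.exp ((t - τ₁) / 2) * A / Real.sqrt τ₁) ^ 2)
        (2 * (Real.exp ((τ - τ₁) / 2) * A / Real.sqrt τ₁) ^ 1 * (b / 2)) τ := hrho.pow 2
    rw [hval] at hsq
    have hquot : HasDerivAt (fun t : ℝ => ρ / (Real.exp ((t - τ₁) / 2) * A / Real.sqrt τ₁))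
        ((0 * (Real.exp ((τ - τ₁) / 2) * A / Real.sqrt τ₁) - ρ * (b / 2))
          / (Real.exp ((τ - τ₁) / 2) * A / Real.sqrt τ₁) ^ 2) τ :=
      (hasDerivAt_const τ ρ).div hrho (by rw [hval]; exact hb)
    rw [hval] at hquot
    have hQat : HasDerivAt Q (deriv Q (ρ / b))
        (ρ / (Real.exp ((τ - τ₁) / 2) * A / Real.sqrt τ₁)) := by
      rw [hval]; exact (hQ _).hasDerivAt
    have hQcomp : HasDerivAt (fun t : ℝ => Q (ρ / (Real.exp ((t - τ₁) / 2) * A / Real.sqrt τ₁)))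
        (deriv Q (ρ / b) * ((0 * b - ρ * (b / 2)) / b ^ 2)) τ := hQat.comp τ hquot
    have hprod := hsq.fun_mul hQcomp
    rw [hfun, hprod.deriv, hval]
    field_simp
    ring
  rw [htime, hder2, hder1, hq₀]
  field_simp
  ring
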